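/- Let h ∈ K(z) be a rational function of degree e > 0 and let H = (H_0, H_1) be a non-degenerate homogeneous lift of h. Then there exist real constants C_1 ≤ C_2 such that for every Z ∈ K^2 \ {(0,0)}, C_1 ≤ log‖H(Z)‖ − e·log‖Z‖ ≤ C_2. -/

import Mathlib

open scoped Classical

open Polynomial Filter MeasureTheory Topology

variable (K : Type*) [NontriviallyNormedField K] [IsAlgClosed K] [CompleteSpace K]
  [IsUltrametricDist K]

/-- The degree of a rational function: max of degrees of numerator and denominator. -/
noncomputable def rdeg (h : RatFunc K) : ℕ := max h.num.natDegree h.denom.natDegree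

/-- Canonical homogeneous coordinates of a point of `P^1(K) = K ∪ {∞}`. -/
noncomputable def homCoord : OnePoint K → K × K :=
  OnePoint.rec (1, 0) (fun a => (a, 1))

/-- The (normalized) chordal metric on `P^1(K)`:
`[z,w] = |z0*w1 - z1*w0| / (max(|z0|,|z1|) * max(|w0|,|w1|))`. -/
noncomputable def chordal (x y : OnePoint K) : ℝ :=
  ‖(homCoord K x).1 * (homCoord K y).2 - (homCoord K x).2 * (homCoord K y).1‖ /
    (max ‖(homCoord K x).1‖ ‖(homCoord K x).2‖ * max ‖(homCoord K y).1‖ ‖(homCoord K y).2‖)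

/-- The action of a rational function on the projective line `P^1(K) = K ∪ {∞}`. -/
noncomputable def evalP1 (h : RatFunc K) : OnePoint K → OnePoint K :=
  OnePoint.rec
    (if h.denom.natDegree < h.num.natDegree then OnePoint.infty
      else ((h.num.coeff h.denom.natDegree / h.denom.leadingCoeff : K) : OnePoint K))
    (fun a => if h.denom.eval a = 0 then OnePoint.infty
      else ((h.num.eval a / h.denom.eval a : K) : OnePoint K))

/-- Composition of rational functions. -/
noncomputable def rcomp (f g : RatFunc K) : RatFunc K :=
  RatFunc.eval (algebraMap K (RatFunc K)) g f

/-- Iterates of a rational function, as rational functions. -/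
noncomputable def riter (f : RatFunc K) : ℕ → RatFunc K
  | 0 => RatFunc.X
  | n + 1 => rcomp K f (riter f n)

/-- Evaluation of a two-variable polynomial at a point of `K²`. -/
noncomputable def pairEval (H : MvPolynomial (Fin 2) K) (Z : K × K) : K :=
  MvPolynomial.eval (fun i : Fin 2 => if i = 0 then Z.1 else Z.2) H

/-- The canonical projection `π : K² \ {0} → P^1(K)` (junk value `∞` at the origin). -/
noncomputable def projPt (Z : K × K) : OnePoint K :=
  if Z.2 = 0 then OnePoint.infty else ((Z.1 / Z.2 : K) : OnePoint K)

/-- `H = (H₀, H₁)` is a non-degenerate homogeneous lift of the rational function `h` of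
degree `e`: both coordinates are homogeneous of degree `e`, their only common zero in `K²`
is the origin, and `π ∘ H = h ∘ π` on `K² \ {0}`. -/
def IsLift (h : RatFunc K) (e : ℕ) (H : MvPolynomial (Fin 2) K × MvPolynomial (Fin 2) K) :
    Prop :=
  H.1.IsHomogeneous e ∧ H.2.IsHomogeneous e ∧
    (∀ Z : K × K, pairEval K H.1 Z = 0 → pairEval K H.2 Z = 0 → Z = 0) ∧
    ∀ Z : K × K, Z ≠ 0 →
      projPt K (pairEval K H.1 Z, pairEval K H.2 Z) = evalP1 K h (projPt K Z)

/-- The self-map of `K²` induced by a pair of two-variable polynomials. -/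
noncomputable def liftMap (H : MvPolynomial (Fin 2) K × MvPolynomial (Fin 2) K)
    (Z : K × K) : K × K :=
  (pairEval K H.1 Z, pairEval K H.2 Z)

/-- Composition of pairs of two-variable polynomials (substitution). -/
noncomputable def pairComp (H G : MvPolynomial (Fin 2) K × MvPolynomial (Fin 2) K) :
    MvPolynomial (Fin 2) K × MvPolynomial (Fin 2) K :=
  ((MvPolynomial.aeval (fun i : Fin 2 => if i = 0 then G.1 else G.2)) H.1,
   (MvPolynomial.aeval (fun i : Fin 2 => if i = 0 then G.1 else G.2)) H.2)

/-- The `n`-fold composition of a pair of two-variable polynomials with itself. -/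
noncomputable def pairPow (H : MvPolynomial (Fin 2) K × MvPolynomial (Fin 2) K) :
    ℕ → MvPolynomial (Fin 2) K × MvPolynomial (Fin 2) K
  | 0 => (MvPolynomial.X 0, MvPolynomial.X 1)
  | n + 1 => pairComp K H (pairPow H n)

/-- The linear form in `K[z₀, z₁]` vanishing exactly at a given point of `P^1(K)`:
`z₀ - a z₁` for `a ∈ K`, and `z₁` for `∞`. -/
noncomputable def linForm : OnePoint K → MvPolynomial (Fin 2) K :=
  OnePoint.rec (MvPolynomial.X 1)
    (fun a => MvPolynomial.X 0 - MvPolynomial.C a * MvPolynomial.X 1)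

/-- Evaluation of a homogeneous polynomial at a scaled point. -/
lemma eval_homog_smul {P : MvPolynomial (Fin 2) K} {n : ℕ} (hP : P.IsHomogeneous n)
    (c : K) (x : Fin 2 → K) :
    MvPolynomial.eval (fun i => c * x i) P = c ^ n * MvPolynomial.eval x P := by
  rw [MvPolynomial.eval_eq, MvPolynomial.eval_eq, Finset.mul_sum]
  refine Finset.sum_congr rfl fun d hd => ?_
  have hdeg : (∑ i ∈ d.support, d i) = n := by
    have h1 := hP (MvPolynomial.mem_support_iff.mp hd)
    simpa [Finsupp.weight, Finsupp.linearCombination, Finsupp.sum] using h1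
  have : ∏ i ∈ d.support, (c * x i) ^ d i
      = c ^ n * ∏ i ∈ d.support, x i ^ d i := by
    simp only [mul_pow, Finset.prod_mul_distrib, Finset.prod_pow_eq_pow_sum, hdeg]
  rw [this]; ring

/-- Evaluation of a two-variable polynomial is bounded on the unit polydisk. -/
lemma exists_pairEval_bound (P : MvPolynomial (Fin 2) K) :
    ∃ C : ℝ, 0 ≤ C ∧ ∀ Z : K × K, ‖Z.1‖ ≤ 1 → ‖Z.2‖ ≤ 1 → ‖pairEval K P Z‖ ≤ C := by
  induction P using MvPolynomial.induction_on with
  | C a => exact ⟨‖a‖, norm_nonneg a, fun Z _ _ => by simp [pairEval]⟩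
  | add p q hp hq =>
      obtain ⟨Cp, hCp0, hCp⟩ := hp; obtain ⟨Cq, hCq0, hCq⟩ := hq
      refine ⟨Cp + Cq, by positivity, fun Z h1 h2 => ?_⟩
      have he : pairEval K (p + q) Z = pairEval K p Z + pairEval K q Z := by
        simp [pairEval]
      rw [he]
      exact (norm_add_le _ _).trans (add_le_add (hCp Z h1 h2) (hCq Z h1 h2))
  | mul_X p i hp =>
      obtain ⟨Cp, hCp0, hCp⟩ := hp
      refine ⟨Cp, hCp0, fun Z h1 h2 => ?_⟩
      have he : pairEval K (p * MvPolynomial.X i) Z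
          = pairEval K p Z * (if i = 0 then Z.1 else Z.2) := by
        simp [pairEval]
      rw [he, norm_mul]
      calc ‖pairEval K p Z‖ * ‖if i = 0 then Z.1 else Z.2‖
          ≤ Cp * 1 := by
            apply mul_le_mul (hCp Z h1 h2) ?_ (norm_nonneg _) hCp0
            split <;> assumption
        _ = Cp := mul_one Cp

lemma pairEval_apply (P : MvPolynomial (Fin 2) K) (x : Fin 2 → K) :
    pairEval K P (x 0, x 1) = MvPolynomial.eval x P := by
  unfold pairEval
  have hx : (fun i : Fin 2 => if i = 0 then (x 0, x 1).1 else (x 0, x 1).2) = x := by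
    funext i
    fin_cases i <;> simp
  rw [hx]

lemma pairEval_add (P Q : MvPolynomial (Fin 2) K) (Z : K × K) :
    pairEval K (P + Q) Z = pairEval K P Z + pairEval K Q Z := by simp [pairEval]

lemma pairEval_mul (P Q : MvPolynomial (Fin 2) K) (Z : K × K) :
    pairEval K (P * Q) Z = pairEval K P Z * pairEval K Q Z := by simp [pairEval]

lemma pairEval_pow (P : MvPolynomial (Fin 2) K) (n : ℕ) (Z : K × K) :
    pairEval K (P ^ n) Z = pairEval K P Z ^ n := by simp [pairEval]

lemma pairEval_X0 (Z : K × K) : pairEval K (MvPolynomial.X 0) Z = Z.1 := by simp [pairEval]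

lemma pairEval_X1 (Z : K × K) : pairEval K (MvPolynomial.X 1) Z = Z.2 := by simp [pairEval]

/-- For a non-degenerate homogeneous lift `H` of a rational function of degree `e > 0`,
the function `Z ↦ log ‖H(Z)‖ - e log ‖Z‖` is bounded above and below on `K² \ {0}`,
where `‖(z₀,z₁)‖ = max (|z₀|, |z₁|)`. -/
theorem lift_log_norm_bounded (h : RatFunc K) (e : ℕ) (he : 0 < e) (hdeg : rdeg K h = e)
    (H : MvPolynomial (Fin 2) K × MvPolynomial (Fin 2) K) (hH : IsLift K h e H) :
    ∃ C₁ C₂ : ℝ, C₁ ≤ C₂ ∧ ∀ Z : K × K, Z ≠ 0 →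
      C₁ ≤ Real.log (max ‖(liftMap K H Z).1‖ ‖(liftMap K H Z).2‖) -
          (e : ℝ) * Real.log (max ‖Z.1‖ ‖Z.2‖) ∧
        Real.log (max ‖(liftMap K H Z).1‖ ‖(liftMap K H Z).2‖) -
          (e : ℝ) * Real.log (max ‖Z.1‖ ‖Z.2‖) ≤ C₂ := by
  obtain ⟨hhom1, hhom2, hnd, -⟩ := hH
  -- Nullstellensatz: powers of the coordinates lie in the ideal generated by `H.1, H.2`.
  set I : Ideal (MvPolynomial (Fin 2) K) := Ideal.span {H.1, H.2} with hI
  have hrad : ∀ j : Fin 2, MvPolynomial.X j ∈ I.radical := by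
    intro j
    rw [← MvPolynomial.vanishingIdeal_zeroLocus_eq_radical (K := K) I]
    rw [MvPolynomial.mem_vanishingIdeal_iff]
    intro x hx
    rw [MvPolynomial.mem_zeroLocus_iff] at hx
    have hx1 : MvPolynomial.eval x H.1 = 0 :=
      hx H.1 (Ideal.subset_span (by simp))
    have hx2 : MvPolynomial.eval x H.2 = 0 :=
      hx H.2 (Ideal.subset_span (by simp))
    have h0 : ((x 0 : K), x 1) = (0 : K × K) := by
      apply hnd <;> rw [pairEval_apply] <;> assumption
    have h0' : x 0 = 0 ∧ x 1 = 0 := by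
      constructor
      · exact congrArg Prod.fst h0
      · exact congrArg Prod.snd h0
    fin_cases j <;> simp [h0'.1, h0'.2]
  obtain ⟨N, hN⟩ := hrad 0
  obtain ⟨M, hM⟩ := hrad 1
  obtain ⟨A, B, hAB⟩ := Ideal.mem_span_pair.mp hN
  obtain ⟨C, D, hCD⟩ := Ideal.mem_span_pair.mp hM
  obtain ⟨CA, hCA0, hCA⟩ := exists_pairEval_bound K A
  obtain ⟨CB, hCB0, hCB⟩ := exists_pairEval_bound K B
  obtain ⟨CC, hCC0, hCC⟩ := exists_pairEval_bound K C
  obtain ⟨CD', hCD0, hCD'⟩ := exists_pairEval_bound K D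
  obtain ⟨C1b, hC1b0, hC1b⟩ := exists_pairEval_bound K H.1
  obtain ⟨C2b, hC2b0, hC2b⟩ := exists_pairEval_bound K H.2
  set Ct : ℝ := CA + CB + CC + CD' + 1 with hCt
  have hCt0 : (0 : ℝ) < Ct := by positivity
  set Cu : ℝ := max C1b C2b with hCu
  -- Key estimate on the "unit sphere".
  have key : ∀ W : K × K, max ‖W.1‖ ‖W.2‖ = 1 →
      0 < max ‖pairEval K H.1 W‖ ‖pairEval K H.2 W‖ ∧
      1 ≤ Ct * max ‖pairEval K H.1 W‖ ‖pairEval K H.2 W‖ ∧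
      max ‖pairEval K H.1 W‖ ‖pairEval K H.2 W‖ ≤ Cu := by
    intro W hW
    have hW1 : ‖W.1‖ ≤ 1 := le_of_le_of_eq (le_max_left _ _) hW
    have hW2 : ‖W.2‖ ≤ 1 := le_of_le_of_eq (le_max_right _ _) hW
    have hWne : W ≠ 0 := by
      intro h
      rw [h] at hW
      simp at hW
    set mH : ℝ := max ‖pairEval K H.1 W‖ ‖pairEval K H.2 W‖ with hmH
    have hmH0 : 0 ≤ mH := le_trans (norm_nonneg _) (le_max_left _ _)
    have hpos : 0 < mH := by
      rcases eq_or_ne (pairEval K H.1 W) 0 with h1 | h1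
      · rcases eq_or_ne (pairEval K H.2 W) 0 with h2 | h2
        · exact absurd (hnd W h1 h2) hWne
        · exact lt_max_of_lt_right (norm_pos_iff.mpr h2)
      · exact lt_max_of_lt_left (norm_pos_iff.mpr h1)
    refine ⟨hpos, ?_, max_le_max (hC1b W hW1 hW2) (hC2b W hW1 hW2)⟩
    -- lower bound via the Nullstellensatz certificates
    have hone : ‖W.1‖ = 1 ∨ ‖W.2‖ = 1 := by
      rcases max_choice ‖W.1‖ ‖W.2‖ with h | h
      · left; rw [← h, hW]
      · right; rw [← h, hW]
    rcases hone with h1 | h1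
    · have heq : pairEval K A W * pairEval K H.1 W + pairEval K B W * pairEval K H.2 W
          = W.1 ^ N := by
        have := congrArg (fun P => pairEval K P W) hAB
        simpa [pairEval_add, pairEval_mul, pairEval_pow, pairEval_X0] using this
      calc (1 : ℝ) = ‖W.1 ^ N‖ := by rw [norm_pow, h1, one_pow]
        _ = ‖pairEval K A W * pairEval K H.1 W + pairEval K B W * pairEval K H.2 W‖ := by
            rw [heq]
        _ ≤ ‖pairEval K A W * pairEval K H.1 W‖ + ‖pairEval K B W * pairEval K H.2 W‖ :=
            norm_add_le _ _
        _ = ‖pairEval K A W‖ * ‖pairEval K H.1 W‖ + ‖pairEval K B W‖ * ‖pairEval K H.2 W‖ := by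
            rw [norm_mul, norm_mul]
        _ ≤ CA * mH + CB * mH := by
            gcongr
            · exact hCA W hW1 hW2
            · exact le_max_left _ _
            · exact hCB W hW1 hW2
            · exact le_max_right _ _
        _ = (CA + CB) * mH := by ring
        _ ≤ Ct * mH := by
            apply mul_le_mul_of_nonneg_right _ hmH0
            rw [hCt]; linarith
    · have heq : pairEval K C W * pairEval K H.1 W + pairEval K D W * pairEval K H.2 W
          = W.2 ^ M := by
        have := congrArg (fun P => pairEval K P W) hCD
        simpa [pairEval_add, pairEval_mul, pairEval_pow, pairEval_X1] using this
      calc (1 : ℝ) = ‖W.2 ^ M‖ := by rw [norm_pow, h1, one_pow]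
        _ = ‖pairEval K C W * pairEval K H.1 W + pairEval K D W * pairEval K H.2 W‖ := by
            rw [heq]
        _ ≤ ‖pairEval K C W * pairEval K H.1 W‖ + ‖pairEval K D W * pairEval K H.2 W‖ :=
            norm_add_le _ _
        _ = ‖pairEval K C W‖ * ‖pairEval K H.1 W‖ + ‖pairEval K D W‖ * ‖pairEval K H.2 W‖ := by
            rw [norm_mul, norm_mul]
        _ ≤ CC * mH + CD' * mH := by
            gcongr
            · exact hCC W hW1 hW2
            · exact le_max_left _ _
            · exact hCD' W hW1 hW2
            · exact le_max_right _ _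
        _ = (CC + CD') * mH := by ring
        _ ≤ Ct * mH := by
            apply mul_le_mul_of_nonneg_right _ hmH0
            rw [hCt]; linarith
  -- Now deduce the bounds for arbitrary `Z ≠ 0` by scaling.
  refine ⟨min (-Real.log Ct) (Real.log Cu), max (-Real.log Ct) (Real.log Cu),
    min_le_max, ?_⟩
  intro Z hZ
  set m : ℝ := max ‖Z.1‖ ‖Z.2‖ with hm
  have hZ12 : Z.1 ≠ 0 ∨ Z.2 ≠ 0 := by
    by_contra hc
    push_neg at hc
    exact hZ (Prod.ext hc.1 hc.2)
  have hm0 : 0 < m := by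
    rcases hZ12 with h | h
    · exact lt_max_of_lt_left (norm_pos_iff.mpr h)
    · exact lt_max_of_lt_right (norm_pos_iff.mpr h)
  obtain ⟨c, hc0, hcm, hcW⟩ :
      ∃ c : K, c ≠ 0 ∧ ‖c‖ = m ∧ max ‖c⁻¹ * Z.1‖ ‖c⁻¹ * Z.2‖ = 1 := by
    rcases le_total ‖Z.2‖ ‖Z.1‖ with h | h
    · have h1 : m = ‖Z.1‖ := max_eq_left h
      have hz1 : Z.1 ≠ 0 := by
        intro hc
        rw [hc] at h1
        simp [h1] at hm0
      refine ⟨Z.1, hz1, h1.symm, ?_⟩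
      have e1 : ‖Z.1⁻¹ * Z.1‖ = 1 := by
        rw [inv_mul_cancel₀ hz1, norm_one]
      have e2 : ‖Z.1⁻¹ * Z.2‖ ≤ 1 := by
        rw [norm_mul, norm_inv]
        rw [inv_mul_le_iff₀ (by rw [← h1]; exact hm0)]
        simpa using h
      rw [e1]
      exact max_eq_left e2
    · have h1 : m = ‖Z.2‖ := max_eq_right h
      have hz2 : Z.2 ≠ 0 := by
        intro hc
        rw [hc] at h1
        simp [h1] at hm0
      refine ⟨Z.2, hz2, h1.symm, ?_⟩
      have e1 : ‖Z.2⁻¹ * Z.2‖ = 1 := by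
        rw [inv_mul_cancel₀ hz2, norm_one]
      have e2 : ‖Z.2⁻¹ * Z.1‖ ≤ 1 := by
        rw [norm_mul, norm_inv]
        rw [inv_mul_le_iff₀ (by rw [← h1]; exact hm0)]
        simpa using h
      rw [e1]
      exact max_eq_right e2
  set W : K × K := (c⁻¹ * Z.1, c⁻¹ * Z.2) with hWdef
  have hWnorm : max ‖W.1‖ ‖W.2‖ = 1 := hcW
  have hZW1 : Z.1 = c * W.1 := by
    rw [hWdef]
    field_simp
  have hZW2 : Z.2 = c * W.2 := by
    rw [hWdef]
    field_simp
  have hsc : ∀ (P : MvPolynomial (Fin 2) K), P.IsHomogeneous e →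
      pairEval K P Z = c ^ e * pairEval K P W := by
    intro P hP
    have hfun : (fun i : Fin 2 => if i = 0 then Z.1 else Z.2)
        = fun i => c * (if i = 0 then W.1 else W.2) := by
      funext i
      split <;> [exact hZW1; exact hZW2]
    unfold pairEval
    rw [hfun, eval_homog_smul K hP]
  have hn1 : ‖pairEval K H.1 Z‖ = m ^ e * ‖pairEval K H.1 W‖ := by
    rw [hsc H.1 hhom1, norm_mul, norm_pow, hcm]
  have hn2 : ‖pairEval K H.2 Z‖ = m ^ e * ‖pairEval K H.2 W‖ := by
    rw [hsc H.2 hhom2, norm_mul, norm_pow, hcm]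
  obtain ⟨hpos, hlow, hup⟩ := key W hWnorm
  set mH : ℝ := max ‖pairEval K H.1 W‖ ‖pairEval K H.2 W‖ with hmH
  have hme : (0 : ℝ) < m ^ e := by positivity
  have hmax : max ‖(liftMap K H Z).1‖ ‖(liftMap K H Z).2‖ = m ^ e * mH := by
    show max ‖pairEval K H.1 Z‖ ‖pairEval K H.2 Z‖ = _
    rw [hn1, hn2, hmH]
    exact (mul_max_of_nonneg _ _ (le_of_lt hme)).symm
  have hlogeq : Real.log (max ‖(liftMap K H Z).1‖ ‖(liftMap K H Z).2‖)
      - (e : ℝ) * Real.log (max ‖Z.1‖ ‖Z.2‖) = Real.log mH := by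
    rw [hmax, Real.log_mul (ne_of_gt hme) (ne_of_gt hpos), Real.log_pow, ← hm]
    ring
  rw [hlogeq]
  constructor
  · refine le_trans (min_le_left _ _) ?_
    have h1 : Ct⁻¹ ≤ mH := by
      rw [inv_le_iff_one_le_mul₀' hCt0]
      linarith [hlow]
    calc -Real.log Ct = Real.log Ct⁻¹ := (Real.log_inv Ct).symm
      _ ≤ Real.log mH := Real.log_le_log (by positivity) h1
  · refine le_trans ?_ (le_max_right _ _)
    exact Real.log_le_log hpos hup
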